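/- Let F and V be the 3n×3n block matrices from the next-generation construction: F has blocks F₁ = (βλᵢⱼ) and F₂ = (βηⱼλᵢⱼ) in its first block row (all other blocks zero), and V is block lower-triangular with diagonal blocks V₁₁ = diag(αᵢ+μᵢ), V₂₂ = diag(γᵃᵢ+δᵃᵢ+μᵢ), V₃₃ = diag(γˢᵢ+δˢᵢ+μᵢ) and subdiagonal blocks −V₂₁ = −diag((1−σ)αᵢ), −V₃₁ = −diag(σαᵢ). Then V is invertible and the spectral radius of FV⁻¹ equals the spectral radius of F₁V₂₁V₁₁⁻¹V₂₂⁻¹ + F₂V₃₁V₁₁⁻¹V₃₃⁻¹. -/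

import Mathlib

open Matrix

section Aux

variable {k l : Type*} [Fintype k] [DecidableEq k] [Fintype l] [DecidableEq l]

lemma mem_spec_iff_det (A : Matrix k k ℂ) (z : ℂ) :
    z ∈ spectrum ℂ A ↔ (z • (1 : Matrix k k ℂ) - A).det = 0 := by
  rw [spectrum.mem_iff, Matrix.isUnit_iff_isUnit_det, isUnit_iff_ne_zero, not_not,
    Algebra.algebraMap_eq_smul_one]

omit [Fintype k] [DecidableEq k] in
lemma spec_zero_mat [Nonempty l] :
    spectrum ℂ (0 : Matrix l l ℂ) = {0} := by
  ext z
  rw [Set.mem_singleton_iff, mem_spec_iff_det, sub_zero, Matrix.det_smul, Matrix.det_one, mul_one,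
    pow_eq_zero_iff Fintype.card_ne_zero]

lemma spec_block_tri (M : Matrix k k ℂ) (N : Matrix k l ℂ) :
    spectrum ℂ (Matrix.fromBlocks M N 0 0 : Matrix (k ⊕ l) (k ⊕ l) ℂ) =
      spectrum ℂ M ∪ spectrum ℂ (0 : Matrix l l ℂ) := by
  ext z
  simp only [mem_spec_iff_det, Set.mem_union]
  have h1 : z • (1 : Matrix (k ⊕ l) (k ⊕ l) ℂ) - Matrix.fromBlocks M N 0 0 =
      Matrix.fromBlocks (z • 1 - M) (0 - N) (0 - 0) (z • 1 - 0) := by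
    rw [← Matrix.fromBlocks_one, Matrix.fromBlocks_smul, sub_eq_add_neg, Matrix.fromBlocks_neg,
      Matrix.fromBlocks_add]
    simp [sub_eq_add_neg]
  rw [h1, sub_zero, sub_zero]
  rw [Matrix.det_fromBlocks_zero₂₁, mul_eq_zero]

omit [Fintype k] [Fintype l] [DecidableEq l] in
lemma fromRows_add' {R : Type*} [AddCommMonoid R] {m : Type*} (A B : Matrix k m R)
    (C D : Matrix l m R) :
    Matrix.fromRows A C + Matrix.fromRows B D = Matrix.fromRows (A + B) (C + D) := by
  ext (i | i) j <;> simp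

end Aux

lemma sSup_abs_union_zero (s : Set ℂ) (hs : s.Finite) (hne : s.Nonempty) :
    sSup {r : ℝ | ∃ z ∈ s ∪ {0}, r = ‖z‖} =
      sSup {r : ℝ | ∃ z ∈ s, r = ‖z‖} := by
  have h1 : {r : ℝ | ∃ z ∈ s, r = ‖z‖} = ((fun z : ℂ => ‖z‖) '' s) := by
    ext r; simp [Set.mem_image, eq_comm]
  have h2 : {r : ℝ | ∃ z ∈ s ∪ {0}, r = ‖z‖} = (((fun z : ℂ => ‖z‖) '' s)) ∪ {0} := by
    ext r
    simp only [Set.mem_union, Set.mem_setOf_eq, Set.mem_image, Set.mem_singleton_iff]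
    constructor
    · rintro ⟨z, hz | hz, rfl⟩
      · exact Or.inl ⟨z, hz, rfl⟩
      · right; simp [hz]
    · rintro (⟨z, hz, rfl⟩ | rfl)
      · exact ⟨z, Or.inl hz, rfl⟩
      · exact ⟨0, Or.inr rfl, by simp⟩
  rw [h1, h2]
  have hbdd : BddAbove (((fun z : ℂ => ‖z‖) '' s)) := (hs.image _).bddAbove
  have hne' : (((fun z : ℂ => ‖z‖) '' s)).Nonempty := hne.image _
  rw [csSup_union hbdd hne' bddAbove_singleton (Set.singleton_nonempty 0), csSup_singleton]
  refine sup_eq_left.mpr ?_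
  obtain ⟨z, hz⟩ := hne
  exact le_trans (norm_nonneg z) (le_csSup hbdd ⟨z, hz, rfl⟩)

/-- The spectral radius of a real square matrix: the maximum modulus of its complex
eigenvalues. -/
noncomputable def specRad {m : Type*} [Fintype m] [DecidableEq m]
    (A : Matrix m m ℝ) : ℝ :=
  sSup {r : ℝ | ∃ z ∈ spectrum ℂ (A.map Complex.ofReal), r = ‖z‖}

/-- For the 3n×3n next-generation block matrices F (with blocks
F₁ = (βλᵢⱼ), F₂ = (βηⱼλᵢⱼ) in its first block row) and block lower-triangular V
(diagonal blocks V₁₁ = diag(αᵢ+μᵢ), V₂₂ = diag(γᵃᵢ+δᵃᵢ+μᵢ), V₃₃ = diag(γˢᵢ+δˢᵢ+μᵢ),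
subdiagonal blocks −V₂₁ = −diag((1−σ)αᵢ), −V₃₁ = −diag(σαᵢ)), V is invertible and
ρ(FV⁻¹) = ρ(F₁V₂₁V₁₁⁻¹V₂₂⁻¹ + F₂V₃₁V₁₁⁻¹V₃₃⁻¹). -/
theorem stmt7 (n : ℕ)
    (α μ γa γs δa δs η : Fin n → ℝ) (β σ : ℝ)
    (hα : ∀ i, 0 < α i) (hμ : ∀ i, 0 < μ i) (hγa : ∀ i, 0 < γa i)
    (hγs : ∀ i, 0 < γs i) (hδa : ∀ i, 0 < δa i) (hδs : ∀ i, 0 < δs i)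
    (hσ0 : 0 ≤ σ) (hσ1 : σ ≤ 1)
    (lam : Fin n → Fin n → ℝ) (hlam : ∀ i j, 0 ≤ lam i j)
    (hη0 : ∀ j, 0 ≤ η j) (hη1 : ∀ j, η j ≤ 1)
    (F₁ F₂ V₁₁ V₂₂ V₃₃ V₂₁ V₃₁ : Matrix (Fin n) (Fin n) ℝ)
    (hF₁ : F₁ = Matrix.of fun i j => β * lam i j)
    (hF₂ : F₂ = Matrix.of fun i j => β * η j * lam i j)
    (hV₁₁ : V₁₁ = Matrix.diagonal fun i => α i + μ i)
    (hV₂₂ : V₂₂ = Matrix.diagonal fun i => γa i + δa i + μ i)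
    (hV₃₃ : V₃₃ = Matrix.diagonal fun i => γs i + δs i + μ i)
    (hV₂₁ : V₂₁ = Matrix.diagonal fun i => (1 - σ) * α i)
    (hV₃₁ : V₃₁ = Matrix.diagonal fun i => σ * α i)
    (F V : Matrix (Fin n ⊕ (Fin n ⊕ Fin n)) (Fin n ⊕ (Fin n ⊕ Fin n)) ℝ)
    (hF : F = Matrix.fromBlocks 0
        (Matrix.of fun i p => Sum.elim (fun j => F₁ i j) (fun j => F₂ i j) p) 0 0)
    (hV : V = Matrix.fromBlocks V₁₁ 0
        (Matrix.of fun p i => Sum.elim (fun a => -(V₂₁ a i)) (fun a => -(V₃₁ a i)) p)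
        (Matrix.fromBlocks V₂₂ 0 0 V₃₃)) :
    IsUnit V.det ∧
    specRad (F * V⁻¹) = specRad (F₁ * V₂₁ * V₁₁⁻¹ * V₂₂⁻¹ + F₂ * V₃₁ * V₁₁⁻¹ * V₃₃⁻¹) := by
  -- nonvanishing of the diagonal entries
  have hd₁ : ∀ i, (α i + μ i) ≠ 0 := fun i => (add_pos (hα i) (hμ i)).ne'
  have hd₂ : ∀ i, (γa i + δa i + μ i) ≠ 0 := fun i =>
    (add_pos (add_pos (hγa i) (hδa i)) (hμ i)).ne'
  have hd₃ : ∀ i, (γs i + δs i + μ i) ≠ 0 := fun i =>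
    (add_pos (add_pos (hγs i) (hδs i)) (hμ i)).ne'
  set e₁ : Fin n → ℝ := fun i => (α i + μ i)⁻¹ with he₁
  set e₂ : Fin n → ℝ := fun i => (γa i + δa i + μ i)⁻¹ with he₂
  set e₃ : Fin n → ℝ := fun i => (γs i + δs i + μ i)⁻¹ with he₃
  have hV₁₁inv : V₁₁ * Matrix.diagonal e₁ = 1 := by
    rw [hV₁₁, Matrix.diagonal_mul_diagonal,
      show (fun i => (α i + μ i) * e₁ i) = fun _ => (1:ℝ) from
        funext fun i => mul_inv_cancel₀ (hd₁ i), Matrix.diagonal_one]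
  have hV₂₂inv : V₂₂ * Matrix.diagonal e₂ = 1 := by
    rw [hV₂₂, Matrix.diagonal_mul_diagonal,
      show (fun i => (γa i + δa i + μ i) * e₂ i) = fun _ => (1:ℝ) from
        funext fun i => mul_inv_cancel₀ (hd₂ i), Matrix.diagonal_one]
  have hV₃₃inv : V₃₃ * Matrix.diagonal e₃ = 1 := by
    rw [hV₃₃, Matrix.diagonal_mul_diagonal,
      show (fun i => (γs i + δs i + μ i) * e₃ i) = fun _ => (1:ℝ) from
        funext fun i => mul_inv_cancel₀ (hd₃ i), Matrix.diagonal_one]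
  have hV₁₁' : V₁₁⁻¹ = Matrix.diagonal e₁ := Matrix.inv_eq_right_inv hV₁₁inv
  have hV₂₂' : V₂₂⁻¹ = Matrix.diagonal e₂ := Matrix.inv_eq_right_inv hV₂₂inv
  have hV₃₃' : V₃₃⁻¹ = Matrix.diagonal e₃ := Matrix.inv_eq_right_inv hV₃₃inv
  -- rewrite the mixed blocks using fromRows / fromCols
  have hCblock : (Matrix.of fun p i => Sum.elim (fun a => -(V₂₁ a i)) (fun a => -(V₃₁ a i)) p)
      = Matrix.fromRows (-V₂₁) (-V₃₁) := by
    ext (p | p) i <;> rfl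
  have hBblock : (Matrix.of fun i p => Sum.elim (fun j => F₁ i j) (fun j => F₂ i j) p)
      = Matrix.fromCols F₁ F₂ := by
    ext i (p | p) <;> rfl
  -- the explicit inverse of V
  set R₂ : Matrix (Fin n) (Fin n) ℝ :=
    Matrix.diagonal (fun i => e₂ i * (((1 - σ) * α i) * e₁ i)) with hR₂
  set R₃ : Matrix (Fin n) (Fin n) ℝ :=
    Matrix.diagonal (fun i => e₃ i * ((σ * α i) * e₁ i)) with hR₃
  set W : Matrix (Fin n ⊕ (Fin n ⊕ Fin n)) (Fin n ⊕ (Fin n ⊕ Fin n)) ℝ :=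
    Matrix.fromBlocks (Matrix.diagonal e₁) 0 (Matrix.fromRows R₂ R₃)
      (Matrix.fromBlocks (Matrix.diagonal e₂) 0 0 (Matrix.diagonal e₃)) with hW
  have h2 : V₂₂ * R₂ = V₂₁ * Matrix.diagonal e₁ := by
    rw [hV₂₂, hV₂₁, hR₂, Matrix.diagonal_mul_diagonal, Matrix.diagonal_mul_diagonal]
    refine congrArg Matrix.diagonal (funext fun i => ?_)
    simp only [he₁, he₂]
    rw [← mul_assoc, mul_inv_cancel₀ (hd₂ i), one_mul]
  have h3 : V₃₃ * R₃ = V₃₁ * Matrix.diagonal e₁ := by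
    rw [hV₃₃, hV₃₁, hR₃, Matrix.diagonal_mul_diagonal, Matrix.diagonal_mul_diagonal]
    refine congrArg Matrix.diagonal (funext fun i => ?_)
    simp only [he₁, he₃]
    rw [← mul_assoc, mul_inv_cancel₀ (hd₃ i), one_mul]
  have hBL : Matrix.fromRows (-V₂₁) (-V₃₁) * Matrix.diagonal e₁ +
      Matrix.fromBlocks V₂₂ 0 0 V₃₃ * Matrix.fromRows R₂ R₃ = 0 := by
    rw [Matrix.fromRows_mul, Matrix.fromBlocks_mul_fromRows, fromRows_add']
    rw [Matrix.zero_mul, Matrix.zero_mul, add_zero, zero_add, h2, h3,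
      Matrix.neg_mul, Matrix.neg_mul, neg_add_cancel, neg_add_cancel]
    ext (i | i) j <;> rfl
  have hDD : Matrix.fromBlocks V₂₂ 0 0 V₃₃ *
      Matrix.fromBlocks (Matrix.diagonal e₂) 0 0 (Matrix.diagonal e₃) = 1 := by
    rw [Matrix.fromBlocks_multiply]
    simp only [Matrix.zero_mul, Matrix.mul_zero, add_zero, zero_add, hV₂₂inv, hV₃₃inv]
    exact Matrix.fromBlocks_one
  have hVW : V * W = 1 := by
    rw [hV, hCblock, hW, Matrix.fromBlocks_multiply]
    simp only [Matrix.zero_mul, Matrix.mul_zero, add_zero, zero_add]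
    rw [hV₁₁inv, hBL, hDD]
    exact Matrix.fromBlocks_one
  have hVinv : V⁻¹ = W := Matrix.inv_eq_right_inv hVW
  have hdetV : IsUnit V.det := Matrix.isUnit_det_of_right_inverse hVW
  refine ⟨hdetV, ?_⟩
  -- compute F * V⁻¹
  set G : Matrix (Fin n) (Fin n) ℝ := F₁ * V₂₁ * V₁₁⁻¹ * V₂₂⁻¹ + F₂ * V₃₁ * V₁₁⁻¹ * V₃₃⁻¹ with hG
  set Nmat : Matrix (Fin n) (Fin n ⊕ Fin n) ℝ :=
    Matrix.fromCols (F₁ * Matrix.diagonal e₂) (F₂ * Matrix.diagonal e₃) with hN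
  have hTL : F₁ * R₂ + F₂ * R₃ = G := by
    rw [hG]
    congr 1
    · rw [hR₂, hV₂₁, hV₁₁', hV₂₂']
      simp only [Matrix.mul_assoc, Matrix.diagonal_mul_diagonal]
      exact congrArg (fun M => F₁ * M) (congrArg Matrix.diagonal (funext fun i => by ring))
    · rw [hR₃, hV₃₁, hV₁₁', hV₃₃']
      simp only [Matrix.mul_assoc, Matrix.diagonal_mul_diagonal]
      exact congrArg (fun M => F₂ * M) (congrArg Matrix.diagonal (funext fun i => by ring))
  have hFV : F * V⁻¹ = Matrix.fromBlocks G Nmat 0 0 := by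
    rw [hVinv, hF, hBblock, hW, Matrix.fromBlocks_multiply]
    simp only [Matrix.zero_mul, Matrix.mul_zero, add_zero, zero_add]
    rw [Matrix.fromCols_mul_fromRows, Matrix.fromCols_mul_fromBlocks, hTL]
    rw [hN, Matrix.mul_zero, Matrix.mul_zero, add_zero, zero_add]
  -- pass to ℂ
  have hmap : (F * V⁻¹).map (Complex.ofReal) =
      Matrix.fromBlocks (G.map Complex.ofReal) (Nmat.map Complex.ofReal) 0 0 := by
    rw [hFV, Matrix.fromBlocks_map,
      Matrix.map_zero _ Complex.ofReal_zero, Matrix.map_zero _ Complex.ofReal_zero]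
  rcases Nat.eq_zero_or_pos n with hn | hn
  · -- degenerate case n = 0 : all spectra are empty
    subst hn
    have hsub : ∀ (m : Type) [Fintype m] [DecidableEq m] [IsEmpty m]
        (A : Matrix m m ℝ), spectrum ℂ (A.map Complex.ofReal) = ∅ := by
      intro m _ _ _ A
      ext z
      simp [spectrum.mem_iff, isUnit_of_subsingleton]
    unfold specRad
    rw [hsub _ (F * V⁻¹), hsub _ G]
  · haveI : Nonempty (Fin n) := ⟨⟨0, hn⟩⟩
    have hspec : spectrum ℂ ((F * V⁻¹).map Complex.ofReal) =
        spectrum ℂ (G.map Complex.ofReal) ∪ {0} := by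
      rw [hmap, spec_block_tri, spec_zero_mat]
    unfold specRad
    rw [hspec]
    exact sSup_abs_union_zero _ (Matrix.finite_spectrum _)
      (spectrum.nonempty_of_isAlgClosed_of_finiteDimensional ℂ _)
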